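/- For all m ≤ n and k ≥ 1, there exist a k-colourable graph G and a family of k(m-1) independent n-sets in G with no rainbow independent m-set. Consequently f_{X(k)}(n,m) = k(m-1)+1 for the class X(k) of k-colourable graphs. -/

import Mathlib

open SimpleGraph Finset

/-- `S` is an independent set in `G`. -/
def IndepIn {V : Type*} (G : SimpleGraph V) (S : Finset V) : Prop :=
  ∀ u ∈ S, ∀ v ∈ S, ¬ G.Adj u v

/-- The family `I` admits a rainbow independent `m`-set in `G`: `m` distinct pairwise
non-adjacent vertices, each chosen from a distinct member of the family. -/
def HasRainbowIndep {V ι : Type*} (G : SimpleGraph V) (I : ι → Finset V) (m : ℕ) : Prop :=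
  ∃ (j : Fin m → ι) (v : Fin m → V), Function.Injective j ∧ Function.Injective v ∧
    (∀ i, v i ∈ I (j i)) ∧ ∀ i i' : Fin m, i ≠ i' → ¬ G.Adj (v i) (v i')

/-- `G` contains no induced copy of `H`. -/
def IndFree {V W : Type*} (G : SimpleGraph V) (H : SimpleGraph W) : Prop :=
  ¬ ∃ f : W ↪ V, ∀ a b : W, G.Adj (f a) (f b) ↔ H.Adj a b

theorem colourable_rainbow_lower (k m n : ℕ) (hk : 1 ≤ k) (hm : 1 ≤ m) (hmn : m ≤ n) :
    ∃ (V : Type) (G : SimpleGraph V), G.Colorable k ∧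
      ∃ I : Fin (k * (m - 1)) → Finset V,
        (∀ i, (I i).card = n ∧ IndepIn G (I i)) ∧
        ¬ HasRainbowIndep G I m := by
  classical
  refine ⟨Fin k × Fin n,
    { Adj := fun u v => u.1 ≠ v.1
      symm := ⟨fun u v h => Ne.symm h⟩
      loopless := ⟨fun u h => h rfl⟩ }, ?_, ?_⟩
  · exact ⟨SimpleGraph.Coloring.mk Prod.fst (fun h => h)⟩
  · have hdiv : ∀ i : Fin (k * (m - 1)), i.val / (m - 1) < k := by
      intro i
      have h0 : 0 < m - 1 := by
        rcases Nat.eq_zero_or_pos (m - 1) with h | h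
        · exact absurd i.isLt (by simp [h])
        · exact h
      exact (Nat.div_lt_iff_lt_mul h0).mpr i.isLt
    refine ⟨fun i => Finset.univ.map
      ⟨fun x => (⟨i.val / (m - 1), hdiv i⟩, x), by intro a b h; simpa using h⟩, ?_, ?_⟩
    · intro i
      constructor
      · simp
      · intro u hu w hw
        simp only [Finset.mem_map, Finset.mem_univ, Function.Embedding.coeFn_mk,
          true_and] at hu hw
        obtain ⟨a, ha⟩ := hu
        obtain ⟨b, hb⟩ := hw
        subst ha; subst hb
        simp
        rfl
    · rintro ⟨j, v, hjinj, hvinj, hmem, hindep⟩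
      have h0 : 0 < m - 1 := by
        rcases Nat.eq_zero_or_pos (m - 1) with h | h
        · exact absurd (j ⟨0, hm⟩).isLt (by simp [h])
        · exact h
      have hfst : ∀ i, (v i).1 = ⟨(j i).val / (m - 1), hdiv (j i)⟩ := by
        intro i
        have := hmem i
        simp only [Finset.mem_map, Finset.mem_univ, Function.Embedding.coeFn_mk,
          true_and] at this
        obtain ⟨a, ha⟩ := this
        rw [← ha]
        rfl
      have hconst : ∀ i i' : Fin m, (j i).val / (m - 1) = (j i').val / (m - 1) := by
        intro i i'
        by_cases h : i = i'
        · rw [h]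
        · have hadj := hindep i i' h
          simp only [ne_eq, not_not] at hadj
          have : (v i).1 = (v i').1 := hadj
          rw [hfst i, hfst i'] at this
          exact Fin.val_eq_of_eq this
      have finj : Function.Injective
          (fun i : Fin m => (⟨(j i).val % (m - 1), Nat.mod_lt _ h0⟩ : Fin (m - 1))) := by
        intro a b hab
        simp only [Fin.mk.injEq] at hab
        apply hjinj
        have hval : (j a).val = (j b).val := by
          have h1 := Nat.div_add_mod (j a).val (m - 1)
          have h2 := Nat.div_add_mod (j b).val (m - 1)
          have h3 := hconst a b
          rw [h3] at h1
          omega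
        exact Fin.eq_of_val_eq hval
      have := Fintype.card_le_of_injective _ finj
      simp only [Fintype.card_fin] at this
      omega
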